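/- arXiv:1102.5072 — 2 statements merged into one kernel-verified Lean document; each statement's English description precedes it below -/
import Mathlib

section
/- Let R be an algebra over a field k, and let φ = [A₁ A₂] be a matrix with entries in R whose columns A₁ and A₂ are a×1 matrices. Suppose every polynomial of degree a in k[x] has a root in k, and every entry of A₂ lies in the k-vector space spanned by the entries of A₁. Then there exist an invertible a×a matrix χ over k and λ ∈ k such that at least one entry of χ(A₂ − λA₁) is zero. -/
/-- Let `R` be an algebra over a field `k`, and let `A₁`, `A₂` be two column vectors of length `a`
with entries in `R`.  Suppose every polynomial of degree `a` in `k[x]` has a root in `k`, and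
every entry of `A₂` lies in the `k`-vector space spanned by the entries of `A₁`.  Then there exist
an invertible `a×a` matrix `χ` over `k` and `λ ∈ k` such that at least one entry of
`χ(A₂ − λA₁)` is zero. -/
theorem stmt6 {k : Type*} [Field k] {R : Type*} [CommRing R] [Algebra k R]
    (a : ℕ) (A₁ A₂ : Fin a → R)
    (hroot : ∀ p : Polynomial k, p.degree = (a : ℕ) → ∃ x : k, p.IsRoot x)
    (hspan : ∀ i, A₂ i ∈ Submodule.span k (Set.range A₁)) :
    ∃ (χ : Matrix (Fin a) (Fin a) k) (l : k), IsUnit χ ∧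
      ∃ i : Fin a,
        ((χ.map (algebraMap k R)).mulVec (fun j => A₂ j - algebraMap k R l * A₁ j)) i = 0 := by
  -- a = 0 is impossible: the constant polynomial 1 has degree 0 = a but no root
  rcases Nat.eq_zero_or_pos a with ha | ha
  · subst ha
    obtain ⟨x, hx⟩ := hroot 1 (by simp)
    simp [Polynomial.IsRoot] at hx
  have : NeZero a := ⟨ha.ne'⟩
  -- extract the matrix M with A₂ = M A₁
  choose M hM using fun i => (Submodule.mem_span_range_iff_exists_fun k).mp (hspan i)
  set Mk : Matrix (Fin a) (Fin a) k := Matrix.of M with hMk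
  -- the characteristic polynomial of Mk.transpose has a root λ
  obtain ⟨l, hl⟩ := hroot (Mk.transpose.charpoly) (by
    rw [Matrix.charpoly_degree_eq_dim]
    simp)
  -- hence det (l • 1 - Mk.transpose) = 0
  have hdet : (l • (1 : Matrix (Fin a) (Fin a) k) - Mk.transpose).det = 0 := by
    have : (l • (1 : Matrix (Fin a) (Fin a) k) - Mk.transpose)
        = (Matrix.charmatrix Mk.transpose).map (Polynomial.eval l) := by
      ext i j
      by_cases hij : i = j <;>
        simp [Matrix.charmatrix_apply, hij, eq_comm, Matrix.one_apply, Matrix.diagonal_apply]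
    rw [this, ← Polynomial.coe_evalRingHom, ← RingHom.mapMatrix_apply, ← RingHom.map_det]
    exact hl
  -- get a left eigenvector v of Mk
  obtain ⟨v, hv0, hv⟩ := Matrix.exists_mulVec_eq_zero_iff.mpr hdet
  have hvM : ∀ j, ∑ i, v i * M i j = l * v j := by
    intro j
    have := congrFun hv j
    simp only [Matrix.sub_mulVec, Matrix.smul_mulVec, Matrix.one_mulVec,
      Pi.sub_apply, Pi.smul_apply, smul_eq_mul, Pi.zero_apply, sub_eq_zero] at this
    rw [this]
    simp [Mk, Matrix.mulVec, dotProduct, Matrix.transpose_apply, mul_comm]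
  -- pick i₀ with v i₀ ≠ 0
  obtain ⟨i₀, hi₀⟩ := Function.ne_iff.mp hv0
  simp only [Pi.zero_apply] at hi₀
  -- χ = identity with row i₀ replaced by v
  refine ⟨(1 : Matrix (Fin a) (Fin a) k).updateRow i₀ v, l, ?_, i₀, ?_⟩
  · rw [Matrix.isUnit_iff_isUnit_det]
    have hv' : v = ∑ j, v j • (1 : Matrix (Fin a) (Fin a) k) j := by
      ext i
      simp [Matrix.one_apply]
    rw [hv', Matrix.det_updateRow_sum]
    simp [isUnit_iff_ne_zero, hi₀]
  · -- the i₀ entry of χ (A₂ - l A₁) is zero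
    have hrow : ∀ j, ((1 : Matrix (Fin a) (Fin a) k).updateRow i₀ v) i₀ j = v j := by
      intro j; rw [Matrix.updateRow_self]
    simp only [Matrix.mulVec, dotProduct, Matrix.map_apply, hrow]
    set f := algebraMap k R
    have key : ∀ j, A₂ j = ∑ m, f (M j m) * A₁ m := by
      intro j
      rw [← hM j]
      simp [Algebra.smul_def, f]
    calc ∑ j, f (v j) * (A₂ j - f l * A₁ j)
        = ∑ j, (f (v j) * A₂ j - f l * (f (v j) * A₁ j)) := by
          apply Finset.sum_congr rfl; intro j _; ring
      _ = (∑ j, f (v j) * A₂ j) - f l * ∑ j, f (v j) * A₁ j := by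
          rw [Finset.sum_sub_distrib, Finset.mul_sum]
      _ = 0 := by
          have : ∑ j, f (v j) * A₂ j = f l * ∑ j, f (v j) * A₁ j := by
            calc ∑ j, f (v j) * A₂ j
                = ∑ j, ∑ m, f (v j) * (f (M j m) * A₁ m) := by
                  apply Finset.sum_congr rfl; intro j _
                  rw [key j, Finset.mul_sum]
              _ = ∑ m, (∑ j, f (v j * M j m)) * A₁ m := by
                  rw [Finset.sum_comm]
                  apply Finset.sum_congr rfl; intro m _
                  rw [Finset.sum_mul]
                  apply Finset.sum_congr rfl; intro j _
                  rw [map_mul]; ring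
              _ = ∑ m, f (l * v m) * A₁ m := by
                  apply Finset.sum_congr rfl; intro m _
                  rw [← map_sum, hvM m]
              _ = f l * ∑ m, f (v m) * A₁ m := by
                  rw [Finset.mul_sum]
                  apply Finset.sum_congr rfl; intro m _
                  rw [map_mul]; ring
          rw [this, sub_self]
end

section
/- Adopt the data of a birationally parameterized non-degenerate base-point-free curve C ⊆ ℙ^{n-1} of degree d over an algebraically closed field k, with Hilbert–Burch matrix φ for [g₁,…,g_n]. For a point p ∈ ℙ^{n-1}, the point p lies on C if and only if the generalized row ideal I₁(pφ) has height 1 in B = k[x,y]. -/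
open MvPolynomial

/-- The height of an ideal: the infimum of the heights of the primes containing it. -/
noncomputable def idealHeight {R : Type*} [CommRing R] (I : Ideal R) : ℕ∞ :=
  ⨅ (P : PrimeSpectrum R) (_ : I ≤ P.asIdeal), Order.height P

namespace Stmt17Aux

variable {k : Type*} [Field k]

lemma eval_smul_of_isHomogeneous {σ : Type*} [Fintype σ] {R : Type*} [CommSemiring R]
    {f : MvPolynomial σ R} {m : ℕ} (hf : f.IsHomogeneous m) (s : R) (q : σ → R) :
    eval (s • q) f = s ^ m * eval q f := by
  rw [eval_eq', eval_eq', Finset.mul_sum]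
  apply Finset.sum_congr rfl
  intro d hd
  have hdeg : ∑ i, d i = m := by
    have h1 : Finsupp.weight 1 d = m := hf (mem_support_iff.mp hd)
    rw [show (Finsupp.weight 1 : (σ →₀ ℕ) →+ ℕ) = Finsupp.weight (fun _ => 1) from rfl,
      ← Finsupp.degree_eq_weight_one] at h1
    rw [← h1, Finsupp.degree]
    exact (Finset.sum_subset (Finset.subset_univ _)
      (fun i _ h => Finsupp.notMem_support_iff.mp h)).symm
  calc coeff d f * ∏ i, (s • q) i ^ d i
      = coeff d f * ((∏ i, s ^ d i) * ∏ i, q i ^ d i) := by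
        rw [← Finset.prod_mul_distrib]
        simp [mul_pow]
    _ = s ^ m * (coeff d f * ∏ i, q i ^ d i) := by
        rw [← hdeg, ← Finset.prod_pow_eq_pow_sum]
        ring

lemma eval_aeval_poly {σ : Type*} (v : σ → Polynomial k) (r : k) (f : MvPolynomial σ k) :
    Polynomial.eval r (aeval v f) = eval (fun i => Polynomial.eval r (v i)) f := by
  induction f using MvPolynomial.induction_on with
  | C a => simp
  | add f g hf hg => simp [hf, hg]
  | mul_X f i hf => simp [hf]

/-- The linear form vanishing at `q`. -/
noncomputable def lin (q : Fin 2 → k) : MvPolynomial (Fin 2) k :=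
  C (q 1) * X 0 - C (q 0) * X 1

lemma lin_ne_zero {q : Fin 2 → k} (hq : q ≠ 0) : lin q ≠ 0 := by
  intro h
  apply hq
  have h1 := congrArg (eval ![(1:k), 0]) h
  have h2 := congrArg (eval ![(0:k), 1]) h
  simp [lin] at h1 h2
  funext i
  fin_cases i <;> simp [h1, h2]

lemma lin_isHomogeneous (q : Fin 2 → k) : (lin q).IsHomogeneous 1 :=
  (isHomogeneous_C_mul_X _ _).sub (isHomogeneous_C_mul_X _ _)

/-- evaluation of `lin q` at `q` is zero -/
lemma eval_lin (q : Fin 2 → k) : eval q (lin q) = 0 := by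
  simp [lin]; ring

section Key

variable {q : Fin 2 → k} {i₀ : Fin 2} (h0 : q i₀ ≠ 0)

/-- the substitution homomorphism into `k[T]` -/
noncomputable def beta (q : Fin 2 → k) (i₀ : Fin 2) :
    MvPolynomial (Fin 2) k →ₐ[k] Polynomial k :=
  aeval (fun i => Polynomial.C (q i / q i₀) * Polynomial.X)

noncomputable def tau (q : Fin 2 → k) (i₀ : Fin 2) :
    MvPolynomial (Fin 2) k →ₐ[k] MvPolynomial (Fin 2) k :=
  aeval (fun i => C (q i / q i₀) * X i₀)

lemma tau_eq : tau q i₀ = (Polynomial.aeval (X i₀ : MvPolynomial (Fin 2) k)).comp (beta q i₀) := by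
  apply MvPolynomial.algHom_ext
  intro i
  simp [tau, beta, algebraMap_eq]

include h0 in
lemma sub_tau_mem (f : MvPolynomial (Fin 2) k) :
    f - tau q i₀ f ∈ Ideal.span {lin q} := by
  induction f using MvPolynomial.induction_on with
  | C a => simp [tau]
  | add f g hf hg =>
      have : f + g - tau q i₀ (f + g) = (f - tau q i₀ f) + (g - tau q i₀ g) := by
        rw [map_add]; ring
      rw [this]; exact Ideal.add_mem _ hf hg
  | mul_X f i hf =>
      have key : X i - C (q i / q i₀) * X i₀ ∈ Ideal.span {lin q} := by
        have hcase : ∀ j : Fin 2, j = 0 ∨ j = 1 := by decide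
        rcases hcase i₀ with rfl | rfl <;> rcases hcase i with rfl | rfl
        · have : (X 0 : MvPolynomial (Fin 2) k) - C (q 0 / q 0) * X 0 = 0 := by
            rw [div_self h0]; simp
          rw [this]; exact Ideal.zero_mem _
        · rw [Ideal.mem_span_singleton']
          refine ⟨C (-(q 0)⁻¹), ?_⟩
          have h1 : (C (q 0)⁻¹ : MvPolynomial (Fin 2) k) * C (q 0) = 1 := by
            rw [← C_mul, inv_mul_cancel₀ h0, C_1]
          rw [lin, div_eq_mul_inv, map_neg, map_mul]
          linear_combination (X (1 : Fin 2) : MvPolynomial (Fin 2) k) * h1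
        · rw [Ideal.mem_span_singleton']
          refine ⟨C ((q 1)⁻¹), ?_⟩
          have h1 : (C (q 1)⁻¹ : MvPolynomial (Fin 2) k) * C (q 1) = 1 := by
            rw [← C_mul, inv_mul_cancel₀ h0, C_1]
          rw [lin, div_eq_mul_inv, map_mul]
          linear_combination (X (0 : Fin 2) : MvPolynomial (Fin 2) k) * h1
        · have : (X 1 : MvPolynomial (Fin 2) k) - C (q 1 / q 1) * X 1 = 0 := by
            rw [div_self h0]; simp
          rw [this]; exact Ideal.zero_mem _
      have : f * X i - tau q i₀ (f * X i)
          = f * (X i - C (q i / q i₀) * X i₀) + (f - tau q i₀ f) * (C (q i / q i₀) * X i₀) := by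
        rw [map_mul]
        have : tau q i₀ (X i) = C (q i / q i₀) * X i₀ := by simp [tau]
        rw [this]; ring
      rw [this]
      exact Ideal.add_mem _ (Ideal.mul_mem_left _ _ key) (Ideal.mul_mem_right _ _ hf)

include h0 in
lemma span_lin_eq_ker : Ideal.span {lin q} = RingHom.ker (beta q i₀).toRingHom := by
  apply le_antisymm
  · rw [Ideal.span_le, Set.singleton_subset_iff]
    show beta q i₀ (lin q) = 0
    simp only [lin, beta, map_sub, map_mul, aeval_C, aeval_X]
    rw [show (algebraMap k (Polynomial k)) (q 1) = Polynomial.C (q 1) from rfl,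
      show (algebraMap k (Polynomial k)) (q 0) = Polynomial.C (q 0) from rfl,
      div_eq_mul_inv, div_eq_mul_inv, map_mul, map_mul]
    ring
  · intro f hf
    have h1 := sub_tau_mem h0 f
    have h2 : tau q i₀ f = 0 := by
      rw [tau_eq]
      show Polynomial.aeval _ (beta q i₀ f) = 0
      rw [show beta q i₀ f = 0 from hf, map_zero]
    rw [h2, sub_zero] at h1
    exact h1

include h0 in
lemma span_lin_isPrime' : (Ideal.span {lin q}).IsPrime := by
  rw [span_lin_eq_ker h0]
  exact RingHom.ker_isPrime _

include h0 in
lemma mem_span_lin' [Infinite k] {f : MvPolynomial (Fin 2) k} {m : ℕ}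
    (hf : f.IsHomogeneous m) (hev : eval q f = 0) : f ∈ Ideal.span {lin q} := by
  rw [span_lin_eq_ker h0]
  show beta q i₀ f = 0
  have hc : eval (fun i => q i / q i₀) f = 0 := by
    have : q = q i₀ • (fun i => q i / q i₀) := by
      funext i
      rw [Pi.smul_apply, smul_eq_mul, mul_comm, div_mul_cancel₀ _ h0]
    rw [this, eval_smul_of_isHomogeneous hf] at hev
    rcases mul_eq_zero.mp hev with h | h
    · exact absurd h (pow_ne_zero _ h0)
    · exact h
  apply Polynomial.funext
  intro r
  rw [Polynomial.eval_zero, beta, eval_aeval_poly]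
  have : (fun i => Polynomial.eval r (Polynomial.C (q i / q i₀) * Polynomial.X))
      = r • (fun i => q i / q i₀) := by
    funext i
    rw [Polynomial.eval_mul, Polynomial.eval_C, Polynomial.eval_X, Pi.smul_apply, smul_eq_mul,
      mul_comm]
  rw [this, eval_smul_of_isHomogeneous hf, hc, mul_zero]

end Key

lemma span_lin_isPrime {q : Fin 2 → k} (hq : q ≠ 0) : (Ideal.span {lin q}).IsPrime := by
  obtain ⟨i₀, h0⟩ := Function.ne_iff.mp hq
  exact span_lin_isPrime' (q := q) (i₀ := i₀) h0

lemma mem_span_lin [Infinite k] {q : Fin 2 → k} (hq : q ≠ 0) {f : MvPolynomial (Fin 2) k} {m : ℕ}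
    (hf : f.IsHomogeneous m) (hev : eval q f = 0) : f ∈ Ideal.span {lin q} := by
  obtain ⟨i₀, h0⟩ := Function.ne_iff.mp hq
  exact mem_span_lin' (q := q) (i₀ := i₀) h0 hf hev

section Height

lemma height_add_one_le {α : Type*} [Preorder α] {a b : α} (h : a < b) :
    Order.height a + 1 ≤ Order.height b := by
  rw [Order.height_eq_iSup_lt_height b]
  exact le_iSup₂_of_le a h le_rfl

variable {R : Type*} [CommRing R]

lemma idealHeight_le_height {J : Ideal R} (P : PrimeSpectrum R) (h : J ≤ P.asIdeal) :
    idealHeight J ≤ Order.height P := iInf₂_le P h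

lemma idealHeight_bot [IsDomain R] : idealHeight (⊥ : Ideal R) = 0 := by
  apply le_antisymm _ (zero_le)
  refine le_trans (iInf₂_le ⊥ bot_le) ?_
  simp [Order.height_bot]

lemma one_le_idealHeight_of_ne_bot [IsDomain R] {J : Ideal R} (h : J ≠ ⊥) :
    1 ≤ idealHeight J := by
  refine le_iInf₂ fun P hP => ?_
  have hlt : (⊥ : PrimeSpectrum R) < P := by
    rw [lt_iff_le_and_ne]
    refine ⟨bot_le, fun he => h (le_bot_iff.mp ?_)⟩
    rw [← he] at hP
    exact hP
  calc (1 : ℕ∞) = Order.height (⊥ : PrimeSpectrum R) + 1 := by simp [Order.height_bot]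
    _ ≤ Order.height P := height_add_one_le hlt

lemma idealHeight_eq_one [IsDomain R] {J : Ideal R} (hne : J ≠ ⊥) (P : PrimeSpectrum R)
    (hJP : J ≤ P.asIdeal) (hP : Order.height P ≤ 1) : idealHeight J = 1 :=
  le_antisymm (le_trans (iInf₂_le P hJP) hP) (one_le_idealHeight_of_ne_bot hne)

end Height

lemma height_span_lin_le_one {q : Fin 2 → k} (hq : q ≠ 0) :
    Order.height (⟨Ideal.span {lin q}, span_lin_isPrime hq⟩ :
      PrimeSpectrum (MvPolynomial (Fin 2) k)) ≤ 1 := by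
  rw [Order.height_eq_iSup_lt_height]
  refine iSup₂_le fun Q hQ => ?_
  have hQbot : Q.asIdeal = ⊥ := by
    have hQle : Q.asIdeal ≤ Ideal.span {lin q} := le_of_lt hQ
    have hlinQ : lin q ∉ Q.asIdeal := by
      intro hmem
      have h1 : Ideal.span {lin q} ≤ Q.asIdeal := by
        rw [Ideal.span_le, Set.singleton_subset_iff]; exact hmem
      exact absurd (PrimeSpectrum.ext (le_antisymm hQle h1)) (ne_of_lt hQ)
    rw [eq_bot_iff]
    intro f hf
    by_contra hf0
    have hf0 : f ≠ 0 := hf0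
    have hdvd : ∀ m : ℕ, ∃ h ∈ Q.asIdeal, f = lin q ^ m * h := by
      intro m
      induction m with
      | zero => exact ⟨f, hf, by simp⟩
      | succ m ih =>
          obtain ⟨h, hh, rfl⟩ := ih
          obtain ⟨h', rfl⟩ := Ideal.mem_span_singleton.mp (hQle hh)
          refine ⟨h', ?_, by ring⟩
          rcases Q.isPrime.mem_or_mem hh with h1 | h1
          · exact absurd h1 hlinQ
          · exact h1
    have hnu : ¬IsUnit (lin q) := by
      intro hu
      exact (span_lin_isPrime hq).ne_top (Ideal.span_singleton_eq_top.mpr hu)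
    obtain ⟨n, a, hnd, hfa⟩ := WfDvdMonoid.max_power_factor' hf0 hnu
    obtain ⟨h, hh, hfh⟩ := hdvd (n + 1)
    apply hnd
    refine ⟨h, ?_⟩
    have hcancel : lin q ^ n * a = lin q ^ n * (lin q * h) := by
      rw [← hfa, hfh]; ring
    exact mul_left_cancel₀ (pow_ne_zero _ (lin_ne_zero hq)) hcancel
  have h0 : Order.height Q = 0 := by
    rw [Order.height_eq_zero]
    intro Q' hQ'
    have : Q'.asIdeal = Q.asIdeal := le_antisymm (by exact hQ') (by rw [hQbot]; exact bot_le)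
    exact le_of_eq (PrimeSpectrum.ext this).symm
  rw [h0]
  simp

lemma lin_e1 : lin (![0, 1] : Fin 2 → k) = X 0 := by
  simp [lin]

lemma two_le_height_of_X_mem {P : PrimeSpectrum (MvPolynomial (Fin 2) k)}
    (h0 : (X 0 : MvPolynomial (Fin 2) k) ∈ P.asIdeal)
    (h1 : (X 1 : MvPolynomial (Fin 2) k) ∈ P.asIdeal) : 2 ≤ Order.height P := by
  have hq : (![0, 1] : Fin 2 → k) ≠ 0 := by
    intro h
    have := congrFun h 1
    simp at this
  set Q1 : PrimeSpectrum (MvPolynomial (Fin 2) k) :=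
    ⟨Ideal.span {lin ![0, 1]}, span_lin_isPrime hq⟩ with hQ1
  have hbotQ1 : (⊥ : PrimeSpectrum (MvPolynomial (Fin 2) k)) < Q1 := by
    rw [lt_iff_le_and_ne]
    refine ⟨bot_le, fun he => ?_⟩
    have : lin (![0, 1] : Fin 2 → k) ∈ (⊥ : Ideal (MvPolynomial (Fin 2) k)) := by
      have : lin (![0, 1] : Fin 2 → k) ∈ Q1.asIdeal := Ideal.subset_span rfl
      rwa [← he] at this
    exact lin_ne_zero hq (by simpa using this)
  have hQ1P : Q1 < P := by
    rw [lt_iff_le_and_ne]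
    constructor
    · show Q1.asIdeal ≤ P.asIdeal
      rw [hQ1, Ideal.span_le, Set.singleton_subset_iff, lin_e1]
      exact h0
    · intro he
      have hX1 : (X 1 : MvPolynomial (Fin 2) k) ∈ Q1.asIdeal := by rw [he]; exact h1
      rw [hQ1] at hX1
      simp only [lin_e1] at hX1
      obtain ⟨h, hh⟩ := Ideal.mem_span_singleton.mp hX1
      have := congrArg (eval ![(0 : k), 1]) hh
      simp at this
  calc (2 : ℕ∞) = (Order.height (⊥ : PrimeSpectrum (MvPolynomial (Fin 2) k)) + 1) + 1 := by
        rw [Order.height_bot]; rfl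
    _ ≤ Order.height Q1 + 1 := add_le_add_left (height_add_one_le hbotQ1) 1
    _ ≤ Order.height P := height_add_one_le hQ1P


lemma exists_proj_root [IsAlgClosed k] {f : MvPolynomial (Fin 2) k} {d : ℕ} (hd : d ≠ 0)
    (hf : f.IsHomogeneous d) : ∃ q : Fin 2 → k, q ≠ 0 ∧ eval q f = 0 := by
  by_contra hno
  push_neg at hno
  set G : Polynomial k := aeval ![Polynomial.X, 1] f with hG
  set G' : Polynomial k := aeval ![1, Polynomial.X] f with hG'
  have hGev : ∀ r : k, G.eval r = eval ![r, 1] f := by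
    intro r
    have hv : (fun i => Polynomial.eval r (![Polynomial.X, 1] i)) = (![r, 1] : Fin 2 → k) := by
      funext i; fin_cases i <;> simp
    rw [hG, eval_aeval_poly, hv]
  have hG'ev : ∀ r : k, G'.eval r = eval ![1, r] f := by
    intro r
    have hv : (fun i => Polynomial.eval r (![1, Polynomial.X] i)) = (![1, r] : Fin 2 → k) := by
      funext i; fin_cases i <;> simp
    rw [hG', eval_aeval_poly, hv]
  have hne1 : (![·, (1:k)]) = fun r => (![r, 1] : Fin 2 → k) := rfl
  have hvne : ∀ r : k, (![r, 1] : Fin 2 → k) ≠ 0 := by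
    intro r h; have := congrFun h 1; simp at this
  have hvne' : ∀ r : k, (![1, r] : Fin 2 → k) ≠ 0 := by
    intro r h; have := congrFun h 0; simp at this
  have hGno : ∀ r : k, G.eval r ≠ 0 := fun r h => hno ![r, 1] (hvne r) (by rw [← hGev]; exact h)
  have hG'no : ∀ r : k, G'.eval r ≠ 0 := fun r h => hno ![1, r] (hvne' r) (by rw [← hG'ev]; exact h)
  have hGdeg : G.degree ≤ 0 := by
    by_contra hdeg
    obtain ⟨r, hr⟩ := IsAlgClosed.exists_root G (fun h0 => hdeg (le_of_eq h0))
    exact hGno r hr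
  have hG'deg : G'.degree ≤ 0 := by
    by_contra hdeg
    obtain ⟨r, hr⟩ := IsAlgClosed.exists_root G' (fun h0 => hdeg (le_of_eq h0))
    exact hG'no r hr
  have ha : G = Polynomial.C (G.coeff 0) := Polynomial.degree_le_zero_iff.mp hGdeg
  have ha' : G' = Polynomial.C (G'.coeff 0) := Polynomial.degree_le_zero_iff.mp hG'deg
  set a := G.coeff 0 with ha0def
  set a' := G'.coeff 0 with ha'0def
  have hsc : ∀ r s : k, s ≠ 0 → eval ![r, s] f = s ^ d * a := by
    intro r s hs
    have h1 : (![r, s] : Fin 2 → k) = s • ![r / s, 1] := by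
      funext i; fin_cases i <;> simp [mul_div_cancel₀ _ hs]
    rw [h1, eval_smul_of_isHomogeneous hf, ← hGev, ha, Polynomial.eval_C]
  have hsc' : ∀ r s : k, r ≠ 0 → eval ![r, s] f = r ^ d * a' := by
    intro r s hr
    have h1 : (![r, s] : Fin 2 → k) = r • ![1, s / r] := by
      funext i; fin_cases i <;> simp [mul_div_cancel₀ _ hr]
    rw [h1, eval_smul_of_isHomogeneous hf, ← hG'ev, ha', Polynomial.eval_C]
  have haa' : a = a' := by
    have h1 := hsc 1 1 one_ne_zero
    have h2 := hsc' 1 1 one_ne_zero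
    rw [h1] at h2; simpa using h2
  have ha0 : a ≠ 0 := by
    have := hGno 0
    rw [ha, Polynomial.eval_C] at this; exact this
  have key : ∀ s : k, s ≠ 0 → s ^ d = 1 := by
    intro s hs
    have h1 := hsc 1 s hs
    have h2 := hsc' 1 s one_ne_zero
    rw [h1, haa'] at h2
    have := mul_right_cancel₀ (haa' ▸ ha0) h2
    simpa using this
  have hzero : (Polynomial.X ^ d - 1 : Polynomial k) = 0 := by
    have hsub : {x : k | x ≠ 0} ⊆ {x : k | (Polynomial.X ^ d - 1 : Polynomial k).IsRoot x} := by
      intro x hx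
      simp only [Set.mem_setOf_eq, Polynomial.IsRoot, Polynomial.eval_sub, Polynomial.eval_pow,
        Polynomial.eval_X, Polynomial.eval_one]
      rw [key x hx]
      ring
    have hinf : {x : k | x ≠ 0}.Infinite := by
      have h2 := (Set.finite_singleton (0 : k)).infinite_compl
      have he : ({0}ᶜ : Set k) = {x : k | x ≠ 0} := by ext x; simp
      rwa [he] at h2
    exact Polynomial.eq_zero_of_infinite_isRoot _ (hinf.mono hsub)
  have := congrArg (Polynomial.eval 0) hzero
  simp [zero_pow hd] at this

section Core

variable {n : ℕ} (g : Fin n → MvPolynomial (Fin 2) k)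
  (φ : Matrix (Fin n) (Fin (n - 1)) (MvPolynomial (Fin 2) k))
  (hHBexact : LinearMap.range φ.mulVecLin =
      LinearMap.ker (Matrix.mulVecLin (Matrix.of fun (_ : Fin 1) (i : Fin n) => g i)))

include hHBexact in
lemma col_syz (j : Fin (n - 1)) : ∑ i, g i * φ i j = 0 := by
  classical
  have hmem : φ.mulVecLin (Pi.single j 1) ∈ LinearMap.range φ.mulVecLin :=
    LinearMap.mem_range_self _ _
  rw [hHBexact, LinearMap.mem_ker] at hmem
  have h0 := congrFun hmem 0
  simp only [Matrix.mulVecLin_apply, Matrix.mulVec, dotProduct, Matrix.of_apply,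
    Pi.zero_apply] at h0
  rw [← h0]
  apply Finset.sum_congr rfl
  intro i _
  congr 1
  simp [Matrix.mulVec, dotProduct, Pi.single_apply, mul_ite, Finset.sum_ite_eq']

include hHBexact in
lemma pairing (p : Fin n → k) (i i₀ : Fin n) :
    ∃ u : Fin (n - 1) → MvPolynomial (Fin 2) k,
      ∑ j, u j * (∑ i', C (p i') * φ i' j) = C (p i) * g i₀ - C (p i₀) * g i := by
  classical
  set w : Fin n → MvPolynomial (Fin 2) k :=
    fun i' => (if i' = i then g i₀ else 0) - (if i' = i₀ then g i else 0) with hwdef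
  have hw : w ∈ LinearMap.ker (Matrix.mulVecLin (Matrix.of fun (_ : Fin 1) (i : Fin n) => g i)) := by
    rw [LinearMap.mem_ker]
    funext x
    simp only [Matrix.mulVecLin_apply, Matrix.mulVec, dotProduct, Matrix.of_apply,
      Pi.zero_apply]
    have hterm : ∀ i' ∈ Finset.univ, g i' * w i'
        = (if i' = i then g i' * g i₀ else 0) - (if i' = i₀ then g i' * g i else 0) := by
      intro i' _
      rw [hwdef]
      dsimp only
      split_ifs <;> ring
    rw [Finset.sum_congr rfl hterm, Finset.sum_sub_distrib]
    simp [Finset.sum_ite_eq', mul_comm]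
  rw [← hHBexact] at hw
  obtain ⟨u, hu⟩ := hw
  refine ⟨u, ?_⟩
  have hu' : ∀ i', ∑ j, φ i' j * u j = w i' := by
    intro i'
    have := congrFun hu i'
    simpa [Matrix.mulVecLin_apply, Matrix.mulVec, dotProduct] using this
  calc ∑ j, u j * (∑ i', C (p i') * φ i' j)
      = ∑ j, ∑ i', u j * (C (p i') * φ i' j) := by
        apply Finset.sum_congr rfl; intro j _; rw [Finset.mul_sum]
    _ = ∑ i', ∑ j, u j * (C (p i') * φ i' j) := Finset.sum_comm
    _ = ∑ i', C (p i') * (∑ j, φ i' j * u j) := by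
        apply Finset.sum_congr rfl; intro i' _
        rw [Finset.mul_sum]
        apply Finset.sum_congr rfl; intro j _; ring
    _ = ∑ i', C (p i') * w i' := by
        apply Finset.sum_congr rfl; intro i' _; rw [hu']
    _ = C (p i) * g i₀ - C (p i₀) * g i := by
        simp only [hwdef, mul_sub, mul_ite, mul_zero]
        rw [Finset.sum_sub_distrib]
        simp [Finset.sum_ite_eq']

end Core

end Stmt17Aux

/-- Adopt the data of a birationally parameterized non-degenerate base-point-free curve
`C ⊆ ℙ^{n-1}` of degree `d` over an algebraically closed field `k`: forms `g₁, …, g_n` of degree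
`d` in `B = k[x,y]` which minimally generate a height-two ideal, such that the induced morphism
`Ψ : ℙ¹ → ℙ^{n-1}`, `q ↦ [g₁(q):⋯:g_n(q)]`, is birational onto its image (equivalently
`k[g₁,…,g_n]` and the Veronese `k[B_d]` have the same quotient field); let `φ` be a homogeneous
Hilbert–Burch matrix for `[g₁, …, g_n]`.  For a point `p ∈ ℙ^{n-1}`, the point `p` lies on `C`
(i.e. is in the image of `Ψ`) if and only if the generalized row ideal `I₁(pφ)` has height `1`
in `B`. -/
theorem stmt17 {k : Type*} [Field k] [IsAlgClosed k] (n d : ℕ) (hd : 0 < d)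
    (g : Fin n → MvPolynomial (Fin 2) k) (hg : ∀ i, (g i).IsHomogeneous d)
    (hmin : LinearIndependent k g)
    (hht : idealHeight (Ideal.span (Set.range g)) = 2)
    (hbir : ∀ v ∈ Algebra.adjoin k {f : MvPolynomial (Fin 2) k | f.IsHomogeneous d},
      ∃ a ∈ Algebra.adjoin k (Set.range g), ∃ b ∈ Algebra.adjoin k (Set.range g),
        b ≠ 0 ∧ b * v = a)
    (φ : Matrix (Fin n) (Fin (n - 1)) (MvPolynomial (Fin 2) k))
    (hHBinj : Function.Injective φ.mulVecLin)
    (hHBexact : LinearMap.range φ.mulVecLin =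
      LinearMap.ker (Matrix.mulVecLin (Matrix.of fun (_ : Fin 1) (i : Fin n) => g i)))
    (hφhom : ∀ j : Fin (n - 1), ∃ dj : ℕ, ∀ i : Fin n, (φ i j).IsHomogeneous dj)
    (p : Fin n → k) (hp : p ≠ 0) :
    ((∃ q : Fin 2 → k, q ≠ 0 ∧ ∃ t : k, t ≠ 0 ∧ ∀ i, p i = t * eval q (g i)) ↔
      idealHeight (Ideal.span
        (Set.range fun j : Fin (n - 1) => ∑ i : Fin n, p i • φ i j)) = 1) := by
  classical
  set e : Fin (n - 1) → MvPolynomial (Fin 2) k := fun j => ∑ i : Fin n, p i • φ i j with he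
  have heC : ∀ j, e j = ∑ i : Fin n, C (p i) * φ i j := by
    intro j
    rw [he]
    exact Finset.sum_congr rfl fun i _ => smul_eq_C_mul _ _
  have hehom : ∀ j, ∃ m, (e j).IsHomogeneous m := by
    intro j
    obtain ⟨dj, hdj⟩ := hφhom j
    refine ⟨dj, ?_⟩
    rw [heC]
    exact IsHomogeneous.sum _ _ _ fun i _ => by
      simpa using (isHomogeneous_C (σ := Fin 2) (p i)).mul (hdj i)
  constructor
  · rintro ⟨q, hq, t, ht, hpt⟩
    have hev : ∀ j, eval q (e j) = 0 := by
      intro j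
      have hcol : ∑ i, g i * φ i j = 0 := Stmt17Aux.col_syz g φ hHBexact j
      rw [heC j, map_sum]
      have hterm : ∀ i ∈ Finset.univ, eval q (C (p i) * φ i j) = t * eval q (g i * φ i j) := by
        intro i _
        rw [map_mul, map_mul, eval_C, hpt i]; ring
      rw [Finset.sum_congr rfl hterm, ← Finset.mul_sum, ← map_sum, hcol, map_zero, mul_zero]
    have hJle : Ideal.span (Set.range e) ≤ Ideal.span {Stmt17Aux.lin q} := by
      rw [Ideal.span_le]
      rintro x ⟨j, rfl⟩
      obtain ⟨m, hm⟩ := hehom j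
      exact Stmt17Aux.mem_span_lin hq hm (hev j)
    have hJne : Ideal.span (Set.range e) ≠ ⊥ := by
      intro hbot
      have hej : ∀ j, e j = 0 := fun j => Ideal.span_eq_bot.mp hbot _ (Set.mem_range_self j)
      obtain ⟨i₁, hpi₁⟩ := Function.ne_iff.mp hp
      simp only [Pi.zero_apply] at hpi₁
      have hgq1 : eval q (g i₁) ≠ 0 := fun h => hpi₁ (by rw [hpt i₁, h, mul_zero])
      by_cases hsub : ∀ i : Fin n, i = i₁
      · -- essentially n = 1 : contradict hht via a root of g i₁
        obtain ⟨q', hq', hevg⟩ := Stmt17Aux.exists_proj_root hd.ne' (hg i₁)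
        have hle : Ideal.span (Set.range g) ≤ Ideal.span {Stmt17Aux.lin q'} := by
          rw [Ideal.span_le]
          rintro x ⟨i, rfl⟩
          rw [hsub i]
          exact Stmt17Aux.mem_span_lin hq' (hg i₁) hevg
        have hcontra := le_trans
          (Stmt17Aux.idealHeight_le_height ⟨_, Stmt17Aux.span_lin_isPrime hq'⟩ hle)
          (Stmt17Aux.height_span_lin_le_one hq')
        rw [hht] at hcontra
        norm_num at hcontra
      · push_neg at hsub
        obtain ⟨i₂, hne⟩ := hsub
        obtain ⟨u, hu⟩ := Stmt17Aux.pairing g φ hHBexact p i₂ i₁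
        have hlhs : ∑ j, u j * (∑ i', C (p i') * φ i' j) = 0 := by
          apply Finset.sum_eq_zero
          intro j _
          rw [← heC j, hej j, mul_zero]
        rw [hlhs] at hu
        have hrel2 : (p i₂) • g i₁ = (p i₁) • g i₂ := by
          rw [smul_eq_C_mul, smul_eq_C_mul]
          exact sub_eq_zero.mp hu.symm
        -- linear independence of the pair
        have hfinj : Function.Injective (![i₂, i₁] : Fin 2 → Fin n) := by
          intro a b hab
          fin_cases a <;> fin_cases b <;>
            simp only [Matrix.cons_val_zero, Matrix.cons_val_one, Matrix.head_cons] at hab <;>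
            first
              | rfl
              | exact absurd hab hne
              | exact absurd hab.symm hne
        have hpair : LinearIndependent k (g ∘ ![i₂, i₁]) := hmin.comp _ hfinj
        have hpair2 : LinearIndependent k ![g i₂, g i₁] := by
          have : g ∘ ![i₂, i₁] = ![g i₂, g i₁] := by
            funext a; fin_cases a <;> rfl
          rwa [this] at hpair
        obtain ⟨-, hnot⟩ := linearIndependent_fin2.mp hpair2
        apply hnot ((p i₁)⁻¹ * p i₂)
        show ((p i₁)⁻¹ * p i₂) • g i₁ = g i₂
        rw [mul_smul, hrel2, ← mul_smul, inv_mul_cancel₀ hpi₁, one_smul]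
    exact Stmt17Aux.idealHeight_eq_one hJne ⟨_, Stmt17Aux.span_lin_isPrime hq⟩ hJle
      (Stmt17Aux.height_span_lin_le_one hq)
  · intro h1
    have hJne : Ideal.span (Set.range e) ≠ ⊥ := by
      intro hbot
      rw [hbot, Stmt17Aux.idealHeight_bot] at h1
      norm_num at h1
    have hcz : ∃ q : Fin 2 → k, q ≠ 0 ∧ ∀ j, eval q (e j) = 0 := by
      by_contra hno
      push_neg at hno
      have h2 : (2 : ℕ∞) ≤ idealHeight (Ideal.span (Set.range e)) := by
        refine le_iInf₂ fun P hP => ?_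
        have hXmem : ∀ i : Fin 2, (X i : MvPolynomial (Fin 2) k) ∈ P.asIdeal := by
          intro i
          have hX : (X i : MvPolynomial (Fin 2) k) ∈ (Ideal.span (Set.range e)).radical := by
            rw [← vanishingIdeal_zeroLocus_eq_radical (K := k)]
            refine (mem_vanishingIdeal_iff).mpr fun x hx => ?_
            have hx0 : x = 0 := by
              by_contra hxne
              obtain ⟨j, hj⟩ := hno x hxne
              exact hj ((mem_zeroLocus_iff).mp hx _ (Ideal.subset_span (Set.mem_range_self j)))
            rw [hx0]
            simp
          exact (P.2.radical_le_iff.mpr hP) hX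
        exact Stmt17Aux.two_le_height_of_X_mem (hXmem 0) (hXmem 1)
      rw [h1] at h2
      norm_num at h2
    obtain ⟨q, hq, hev⟩ := hcz
    have hgq : ∃ i₀ : Fin n, eval q (g i₀) ≠ 0 := by
      by_contra hall
      push_neg at hall
      have hle : Ideal.span (Set.range g) ≤ Ideal.span {Stmt17Aux.lin q} := by
        rw [Ideal.span_le]
        rintro x ⟨i, rfl⟩
        exact Stmt17Aux.mem_span_lin hq (hg i) (hall i)
      have hcontra := le_trans
        (Stmt17Aux.idealHeight_le_height ⟨_, Stmt17Aux.span_lin_isPrime hq⟩ hle)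
        (Stmt17Aux.height_span_lin_le_one hq)
      rw [hht] at hcontra
      norm_num at hcontra
    obtain ⟨i₀, hi₀⟩ := hgq
    have hrel : ∀ i, p i * eval q (g i₀) = p i₀ * eval q (g i) := by
      intro i
      obtain ⟨u, hu⟩ := Stmt17Aux.pairing g φ hHBexact p i i₀
      have h3 := congrArg (eval q) hu
      rw [map_sub, map_mul, map_mul, eval_C, eval_C, map_sum] at h3
      have h4 : ∀ j ∈ Finset.univ, eval q (u j * ∑ i', C (p i') * φ i' j) = 0 := by
        intro j _
        rw [map_mul, ← heC j, hev j, mul_zero]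
      rw [Finset.sum_congr rfl h4, Finset.sum_const_zero] at h3
      exact sub_eq_zero.mp h3.symm
    refine ⟨q, hq, p i₀ / eval q (g i₀), ?_, ?_⟩
    · intro ht0
      have hpz : p i₀ = 0 := by
        rcases div_eq_zero_iff.mp ht0 with h | h
        · exact h
        · exact absurd h hi₀
      apply hp
      funext i
      have h5 := hrel i
      rw [hpz, zero_mul] at h5
      rcases mul_eq_zero.mp h5 with h | h
      · exact h
      · exact absurd h hi₀
    · intro i
      rw [div_mul_eq_mul_div, ← hrel i, mul_div_assoc, div_self hi₀, mul_one]
end
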